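/- Let C, P, Q be groups and let α : C → P and ω : C → Q be injective homomorphisms. Let G = P ∗_C Q be the amalgamated free product (the pushout of α and ω), in which P and Q embed canonically and the images of α(c) and ω(c) coincide for every c ∈ C. Let P₀ ≤ P and Q₀ ≤ Q be subgroups, let a ∈ P and b ∈ Q, and suppose the folded condition α⁻¹(a⁻¹P₀a) = ω⁻¹(bQ₀b⁻¹) holds; call this subgroup B ≤ C. Then the maps α_f : B → P₀, c ↦ a·α(c)·a⁻¹ and ω_f : B → Q₀, c ↦ b⁻¹·ω(c)·b are well-defined injective homomorphisms, and the homomorphism from the amalgamated free product P₀ ∗_B Q₀ (formed with respect to α_f and ω_f) to G which restricts on P₀ to the inclusion P₀ ↪ G and on Q₀ to the map x ↦ (ab)·x·(ab)⁻¹ is injective; its image is the subgroup of G generated by P₀ ∪ (ab)Q₀(ab)⁻¹. -/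

import Mathlib

open Monoid

/-- The normal subgroup of the free product `P ∗ Q` generated by the relations
`α(c) = ω(c)` for `c ∈ C`. -/
abbrev amalRels {C P Q : Type*} [Group C] [Group P] [Group Q]
    (α : C →* P) (ω : C →* Q) : Subgroup (Coprod P Q) :=
  Subgroup.normalClosure {x | ∃ c : C, x = Coprod.inl (α c) * (Coprod.inr (ω c))⁻¹}

/-- The amalgamated free product `P ∗_C Q`, i.e. the pushout of `α : C → P` and
`ω : C → Q` in the category of groups. -/
abbrev Amal {C P Q : Type*} [Group C] [Group P] [Group Q]
    (α : C →* P) (ω : C →* Q) : Type _ :=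
  Coprod P Q ⧸ amalRels α ω

/-- The canonical map `P → P ∗_C Q`. -/
abbrev Amal.inl {C P Q : Type*} [Group C] [Group P] [Group Q]
    (α : C →* P) (ω : C →* Q) : P →* Amal α ω :=
  (QuotientGroup.mk' (amalRels α ω)).comp Coprod.inl

/-- The canonical map `Q → P ∗_C Q`. -/
abbrev Amal.inr {C P Q : Type*} [Group C] [Group P] [Group Q]
    (α : C →* P) (ω : C →* Q) : Q →* Amal α ω :=
  (QuotientGroup.mk' (amalRels α ω)).comp Coprod.inr


universe u v w
set_option maxHeartbeats 1000000

section BoolFam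
variable (P : Type u) (Q : Type v)

abbrev boolFam : Bool → Type (max u v) := fun i => cond i (ULift.{v} P) (ULift.{u} Q)

variable [Group P] [Group Q]

instance : ∀ i : Bool, Group (boolFam P Q i)
  | true => inferInstanceAs (Group (ULift P))
  | false => inferInstanceAs (Group (ULift Q))

variable {C : Type w} [Group C] {P Q}

def boolHom (α : C →* P) (ω : C →* Q) : ∀ i : Bool, C →* boolFam P Q i
  | true => (MulEquiv.ulift.symm : P ≃* ULift P).toMonoidHom.comp α
  | false => (MulEquiv.ulift.symm : Q ≃* ULift Q).toMonoidHom.comp ω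

theorem boolHom_injective {α : C →* P} {ω : C →* Q} (hα : Function.Injective α)
    (hω : Function.Injective ω) : ∀ i : Bool, Function.Injective (boolHom α ω i)
  | true => (MulEquiv.ulift.symm.injective).comp hα
  | false => (MulEquiv.ulift.symm.injective).comp hω

end BoolFam

section Equiv
open Monoid.PushoutI
variable {C : Type w} {P : Type u} {Q : Type v} [Group C] [Group P] [Group Q]
  (α : C →* P) (ω : C →* Q)

theorem amal_inl_eq_inr (c : C) : Amal.inl α ω (α c) = Amal.inr α ω (ω c) := by
  show QuotientGroup.mk _ = QuotientGroup.mk _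
  rw [QuotientGroup.eq]
  have hg : Coprod.inl (α c) * (Coprod.inr (ω c))⁻¹ ∈ amalRels α ω :=
    Subgroup.subset_normalClosure ⟨c, rfl⟩
  have := (amalRels α ω).inv_mem ((Subgroup.Normal.conj_mem
    (Subgroup.normalClosure_normal) _ hg (Coprod.inl (α c))⁻¹))
  simpa [mul_assoc] using this

def amalF : Coprod P Q →* PushoutI (boolHom α ω) :=
  Coprod.lift ((PushoutI.of (φ := boolHom α ω) true).comp MulEquiv.ulift.symm.toMonoidHom)
    ((PushoutI.of (φ := boolHom α ω) false).comp MulEquiv.ulift.symm.toMonoidHom)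

@[simp] theorem amalF_inl (p : P) :
    amalF α ω (Coprod.inl p) = PushoutI.of (φ := boolHom α ω) true ⟨p⟩ := by
  rw [amalF, Coprod.lift_apply_inl]; rfl

@[simp] theorem amalF_inr (q : Q) :
    amalF α ω (Coprod.inr q) = PushoutI.of (φ := boolHom α ω) false ⟨q⟩ := by
  rw [amalF, Coprod.lift_apply_inr]; rfl

theorem amal_rels_le_ker : amalRels α ω ≤ (amalF α ω).ker := by
  apply Subgroup.normalClosure_le_normal
  rintro x ⟨c, rfl⟩
  have h1 : PushoutI.of (φ := boolHom α ω) true (boolHom α ω true c) = base (boolHom α ω) c :=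
    of_apply_eq_base _ _ _
  have h2 : PushoutI.of (φ := boolHom α ω) false (boolHom α ω false c) = base (boolHom α ω) c :=
    of_apply_eq_base _ _ _
  have heq : amalF α ω (Coprod.inl (α c) * (Coprod.inr (ω c))⁻¹) =
      PushoutI.of (φ := boolHom α ω) true (boolHom α ω true c) *
        (PushoutI.of (φ := boolHom α ω) false (boolHom α ω false c))⁻¹ := by
    rw [map_mul, map_inv, amalF_inl, amalF_inr]; rfl
  simp only [SetLike.mem_coe, MonoidHom.mem_ker, heq, h1, h2, mul_inv_cancel]

def amalToPush : Amal α ω →* PushoutI (boolHom α ω) :=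
  QuotientGroup.lift (amalRels α ω) (amalF α ω) (amal_rels_le_ker α ω)

def pushToAmal : PushoutI (boolHom α ω) →* Amal α ω :=
  PushoutI.lift
    (fun i => Bool.rec ((Amal.inr α ω).comp MulEquiv.ulift.toMonoidHom)
      ((Amal.inl α ω).comp MulEquiv.ulift.toMonoidHom) i)
    ((Amal.inl α ω).comp α)
    (by
      intro i
      cases i <;> ext c
      · exact (amal_inl_eq_inr α ω c).symm
      · rfl)

@[simp] theorem amalToPush_inl (p : P) :
    amalToPush α ω (Amal.inl α ω p) = PushoutI.of (φ := boolHom α ω) true ⟨p⟩ := by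
  show amalToPush α ω (QuotientGroup.mk (Coprod.inl p)) = _
  rw [amalToPush, QuotientGroup.lift_mk', amalF_inl]

@[simp] theorem amalToPush_inr (q : Q) :
    amalToPush α ω (Amal.inr α ω q) = PushoutI.of (φ := boolHom α ω) false ⟨q⟩ := by
  show amalToPush α ω (QuotientGroup.mk (Coprod.inr q)) = _
  rw [amalToPush, QuotientGroup.lift_mk', amalF_inr]

@[simp] theorem pushToAmal_of_true (x : boolFam P Q true) :
    pushToAmal α ω (PushoutI.of (φ := boolHom α ω) true x) = Amal.inl α ω x.down := by
  rw [pushToAmal, PushoutI.lift_of]; rfl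

@[simp] theorem pushToAmal_of_false (x : boolFam P Q false) :
    pushToAmal α ω (PushoutI.of (φ := boolHom α ω) false x) = Amal.inr α ω x.down := by
  rw [pushToAmal, PushoutI.lift_of]; rfl

theorem amal_hom_ext {K : Type*} [Group K] {f g : Amal α ω →* K}
    (h1 : f.comp (Amal.inl α ω) = g.comp (Amal.inl α ω))
    (h2 : f.comp (Amal.inr α ω) = g.comp (Amal.inr α ω)) : f = g := by
  apply QuotientGroup.monoidHom_ext
  exact Coprod.hom_ext (by ext x; exact DFunLike.congr_fun h1 x)
    (by ext x; exact DFunLike.congr_fun h2 x)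

def amalPushEquiv : Amal α ω ≃* PushoutI (boolHom α ω) :=
  MonoidHom.toMulEquiv (amalToPush α ω) (pushToAmal α ω)
    (amal_hom_ext α ω
      (by ext p
          show pushToAmal α ω (amalToPush α ω (Amal.inl α ω p)) = Amal.inl α ω p
          rw [amalToPush_inl, pushToAmal_of_true])
      (by ext q
          show pushToAmal α ω (amalToPush α ω (Amal.inr α ω q)) = Amal.inr α ω q
          rw [amalToPush_inr, pushToAmal_of_false]))
    (PushoutI.hom_ext_nonempty (fun i => by
      cases i <;> ext x
      · show amalToPush α ω (pushToAmal α ω (PushoutI.of false x)) = PushoutI.of false x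
        rw [pushToAmal_of_false, amalToPush_inr]; rfl
      · show amalToPush α ω (pushToAmal α ω (PushoutI.of true x)) = PushoutI.of true x
        rw [pushToAmal_of_true, amalToPush_inl]; rfl))

end Equiv

section Theta
open Monoid.PushoutI Monoid.CoprodI Monoid.PushoutI.NormalWord

variable {ι : Type*} {H H' : Type*} [Group H] [Group H']
  {G : ι → Type*} {G' : ι → Type*} [∀ i, Group (G i)] [∀ i, Group (G' i)]
  (φ : ∀ i, H →* G i) (φ' : ∀ i, H' →* G' i)

theorem notin_range_of_mem_set {d : Transversal φ} {i : ι} {g : G i}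
    (hg : g ∈ d.set i) (hg1 : g ≠ 1) : g ∉ (φ i).range := by
  intro hr
  have := (d.compl i).1
    (a₁ := (⟨⟨g, hr⟩, ⟨1, d.one_mem i⟩⟩ : ((φ i).range : Set (G i)) × d.set i))
    (a₂ := (⟨⟨1, Subgroup.one_mem _⟩, ⟨g, hg⟩⟩ : ((φ i).range : Set (G i)) × d.set i))
    (by simp)
  exact hg1 (congrArg (fun p => (p.2 : G i)) this).symm

theorem exists_reduced_decomp (hφ : ∀ i, Function.Injective (φ i)) (x : PushoutI φ) :
    ∃ (h : H) (w : Word G), Reduced φ w ∧ x = base φ h * ofCoprodI w.prod := by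
  classical
  obtain ⟨d⟩ := transversal_nonempty φ hφ
  refine ⟨(NormalWord.equiv (d := d) x).head, (NormalWord.equiv (d := d) x).toWord, ?_, ?_⟩
  · intro g hg
    exact notin_range_of_mem_set φ
      ((NormalWord.equiv (d := d) x).normalized g.1 g.2 hg)
      ((NormalWord.equiv (d := d) x).toWord.ne_one g hg)
  · have := (NormalWord.equiv (d := d)).symm_apply_apply x
    conv_lhs => rw [← this]
    rfl

variable {φ φ'} (η : H →* H') (f : ∀ i, G i →* G' i)
  (hcomm : ∀ i, (f i).comp (φ i) = (φ' i).comp η)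

def theta : PushoutI φ →* PushoutI φ' :=
  PushoutI.lift (fun i => (PushoutI.of (φ := φ') i).comp (f i)) ((base φ').comp η)
    (by intro i
        rw [MonoidHom.comp_assoc, hcomm i, ← MonoidHom.comp_assoc, of_comp_eq_base])

@[simp] theorem theta_of (i : ι) (g : G i) :
    theta η f hcomm (PushoutI.of (φ := φ) i g) = PushoutI.of (φ := φ') i (f i g) := by
  rw [theta, PushoutI.lift_of]; rfl

@[simp] theorem theta_base (h : H) :
    theta η f hcomm (base φ h) = base φ' (η h) := by
  rw [theta, PushoutI.lift_base]; rfl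

/-- The letter-wise image of a word. -/
def mapWord (w : Word G) (hred : Reduced φ w)
    (hf : ∀ i (g : G i), g ∉ (φ i).range → f i g ∉ (φ' i).range) : Word G' where
  toList := w.toList.map (fun l => ⟨l.1, f l.1 l.2⟩)
  ne_one := by
    intro l hl
    rw [List.mem_map] at hl
    obtain ⟨l', hl', rfl⟩ := hl
    intro h1
    have h1' : f l'.1 l'.2 = 1 := h1
    exact hf l'.1 l'.2 (hred l' hl') (by rw [h1']; exact Subgroup.one_mem _)
  chain_ne := by
    refine List.isChain_map_of_isChain _ ?_ w.chain_ne
    intro a b hab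
    exact hab

theorem mapWord_reduced (w : Word G) (hred : Reduced φ w)
    (hf : ∀ i (g : G i), g ∉ (φ i).range → f i g ∉ (φ' i).range) :
    Reduced φ' (mapWord f w hred hf) := by
  intro l hl
  rw [mapWord] at hl
  simp only [List.mem_map] at hl
  obtain ⟨l', hl', rfl⟩ := hl
  exact hf l'.1 l'.2 (hred l' hl')

theorem theta_ofCoprodI_prod (w : Word G) (hred : Reduced φ w)
    (hf : ∀ i (g : G i), g ∉ (φ i).range → f i g ∉ (φ' i).range) :
    theta η f hcomm (ofCoprodI w.prod) = ofCoprodI (mapWord f w hred hf).prod := by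
  show theta η f hcomm (ofCoprodI (List.prod (w.toList.map fun l => CoprodI.of l.snd))) =
    ofCoprodI (List.prod ((w.toList.map (fun l => (⟨l.1, f l.1 l.2⟩ : Σ i, G' i))).map
      fun l => CoprodI.of l.snd))
  induction w.toList with
  | nil => simp
  | cons x xs ih =>
    simp only [List.map_cons, List.prod_cons, map_mul, ih, ofCoprodI_of, theta_of]

theorem theta_injective (hφ' : ∀ i, Function.Injective (φ' i))
    (hφ : ∀ i, Function.Injective (φ i)) (hη : Function.Injective η)
    (hf : ∀ i (g : G i), g ∉ (φ i).range → f i g ∉ (φ' i).range) :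
    Function.Injective (theta η f hcomm) := by
  rw [injective_iff_map_eq_one]
  intro x hx
  obtain ⟨h, w, hred, rfl⟩ := exists_reduced_decomp φ hφ x
  rw [map_mul, theta_base, theta_ofCoprodI_prod η f hcomm w hred hf] at hx
  have hMeq : ofCoprodI (mapWord f w hred hf).prod = (base φ' (η h))⁻¹ :=
    (mul_eq_one_iff_inv_eq.mp hx).symm
  have hmem : ofCoprodI (mapWord f w hred hf).prod ∈ (base φ').range :=
    ⟨(η h)⁻¹, by rw [map_inv, hMeq]⟩
  have hempty := (mapWord_reduced f w hred hf).eq_empty_of_mem_range hφ' hmem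
  have hnil : w.toList = [] := by
    have h2 : (mapWord f w hred hf).toList = [] := by rw [hempty]; rfl
    rw [mapWord] at h2
    exact List.map_eq_nil_iff.mp h2
  have hwe : w = Word.empty := by
    rcases w with ⟨l, h1, h2⟩
    simp only at hnil
    subst hnil
    rfl
  have hw0 : w.prod = 1 := by rw [hwe]; exact Word.prod_empty (M := G)
  have hw : ofCoprodI (φ := φ) w.prod = 1 := by rw [hw0, map_one]
  have hM1 : ofCoprodI (φ := φ') (mapWord f w hred hf).prod = 1 := by rw [hempty]; simp
  rw [hM1, mul_one] at hx
  have h1 : h = 1 := hη (by rw [map_one]; exact base_injective hφ' (by rw [hx, map_one]))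
  rw [hw, mul_one, h1, map_one]

end Theta

section Closure
variable {C : Type w} {P : Type u} {Q : Type v} [Group C] [Group P] [Group Q]
  (α : C →* P) (ω : C →* Q)

theorem amal_closure_top :
    Subgroup.closure (Set.range (Amal.inl α ω) ∪ Set.range (Amal.inr α ω)) =
      (⊤ : Subgroup (Amal α ω)) := by
  rw [eq_top_iff]
  intro x _
  obtain ⟨y, rfl⟩ := QuotientGroup.mk'_surjective (amalRels α ω) x
  have hy : y ∈ Subgroup.closure (Set.range (Coprod.inl : P →* Coprod P Q) ∪
      Set.range (Coprod.inr : Q →* Coprod P Q)) := by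
    rw [Coprod.closure_range_inl_union_inr]; trivial
  induction hy using Subgroup.closure_induction with
  | mem z hz =>
    apply Subgroup.subset_closure
    rcases hz with ⟨p, rfl⟩ | ⟨q, rfl⟩
    · exact Or.inl ⟨p, rfl⟩
    · exact Or.inr ⟨q, rfl⟩
  | one => rw [map_one]; exact Subgroup.one_mem _
  | mul z₁ z₂ _ _ h1 h2 => rw [map_mul]; exact Subgroup.mul_mem _ (h1 trivial) (h2 trivial)
  | inv z _ h => rw [map_inv]; exact Subgroup.inv_mem _ (h trivial)

end Closure
theorem amalgam_induced_splitting
    {C P Q : Type*} [Group C] [Group P] [Group Q]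
    (α : C →* P) (ω : C →* Q)
    (hα : Function.Injective α) (hω : Function.Injective ω)
    (P₀ : Subgroup P) (Q₀ : Subgroup Q) (a : P) (b : Q)
    (B : Subgroup C)
    (hB : B = Subgroup.comap α (Subgroup.map (MulAut.conj a⁻¹).toMonoidHom P₀))
    (hfold : Subgroup.comap α (Subgroup.map (MulAut.conj a⁻¹).toMonoidHom P₀) =
      Subgroup.comap ω (Subgroup.map (MulAut.conj b).toMonoidHom Q₀)) :
    ∃ (αf : ↥B →* ↥P₀) (ωf : ↥B →* ↥Q₀),
      Function.Injective αf ∧ Function.Injective ωf ∧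
      (∀ c : B, (αf c : P) = a * α c * a⁻¹) ∧
      (∀ c : B, (ωf c : Q) = b⁻¹ * ω c * b) ∧
      ∃ Ψ : Amal αf ωf →* Amal α ω,
        (∀ x : P₀, Ψ (Amal.inl αf ωf x) = Amal.inl α ω (x : P)) ∧
        (∀ y : Q₀, Ψ (Amal.inr αf ωf y) =
          (Amal.inl α ω a * Amal.inr α ω b) * Amal.inr α ω (y : Q) *
            (Amal.inl α ω a * Amal.inr α ω b)⁻¹) ∧
        Function.Injective Ψ ∧
        Ψ.range =
          Subgroup.closure
            ((Amal.inl α ω '' (P₀ : Set P)) ∪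
              ((fun x => (Amal.inl α ω a * Amal.inr α ω b) * x *
                  (Amal.inl α ω a * Amal.inr α ω b)⁻¹) ''
                (Amal.inr α ω '' (Q₀ : Set Q)))) := by
  -- membership lemmas
  have hmemP : ∀ c : ↥B, a * α ↑c * a⁻¹ ∈ P₀ := by
    rintro ⟨cv, hcv⟩
    show a * α cv * a⁻¹ ∈ P₀
    rw [hB, Subgroup.mem_comap, Subgroup.mem_map] at hcv
    obtain ⟨p, hp, hpc⟩ := hcv
    have hpc' : a⁻¹ * p * a = α cv := by
      simpa [MulAut.conj_apply] using hpc
    have hpval : p = a * α cv * a⁻¹ := by rw [← hpc']; group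
    exact hpval ▸ hp
  have hmemQ : ∀ c : ↥B, b⁻¹ * ω ↑c * b ∈ Q₀ := by
    rintro ⟨cv, hcv⟩
    show b⁻¹ * ω cv * b ∈ Q₀
    rw [hB, hfold, Subgroup.mem_comap, Subgroup.mem_map] at hcv
    obtain ⟨q, hq, hqc⟩ := hcv
    have hqc' : b * q * b⁻¹ = ω cv := by
      simpa [MulAut.conj_apply] using hqc
    have hqval : q = b⁻¹ * ω cv * b := by rw [← hqc']; group
    exact hqval ▸ hq
  -- the two induced homomorphisms
  set αf : ↥B →* ↥P₀ := ((MulAut.conj a).toMonoidHom.comp (α.comp B.subtype)).codRestrict P₀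
      (fun c => by simpa [MulAut.conj_apply] using hmemP c) with hαfdef
  set ωf : ↥B →* ↥Q₀ := ((MulAut.conj b⁻¹).toMonoidHom.comp (ω.comp B.subtype)).codRestrict Q₀
      (fun c => by simpa [MulAut.conj_apply] using hmemQ c) with hωfdef
  have hαf : ∀ c : ↥B, (αf c : P) = a * α ↑c * a⁻¹ := by
    intro c
    show (MulAut.conj a) (α ↑c) = a * α ↑c * a⁻¹
    rw [MulAut.conj_apply]
  have hωf : ∀ c : ↥B, (ωf c : Q) = b⁻¹ * ω ↑c * b := by
    intro c
    show (MulAut.conj b⁻¹) (ω ↑c) = b⁻¹ * ω ↑c * b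
    rw [MulAut.conj_apply]; group
  have hαfinj : Function.Injective αf := by
    intro x y hxy
    apply Subtype.ext
    apply hα
    have h1 : a * α ↑x * a⁻¹ = a * α ↑y * a⁻¹ := by
      rw [← hαf x, ← hαf y, hxy]
    exact mul_left_cancel (mul_right_cancel h1)
  have hωfinj : Function.Injective ωf := by
    intro x y hxy
    apply Subtype.ext
    apply hω
    have h1 : b⁻¹ * ω ↑x * b = b⁻¹ * ω ↑y * b := by
      rw [← hωf x, ← hωf y, hxy]
    exact mul_left_cancel (mul_right_cancel h1)
  refine ⟨αf, ωf, hαfinj, hωfinj, hαf, hωf, ?_⟩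
  -- the letter-wise maps
  set fP : ULift.{_} ↥P₀ →* ULift.{_} P :=
    MulEquiv.ulift.symm.toMonoidHom.comp (((MulAut.conj a⁻¹).toMonoidHom.comp
      P₀.subtype).comp MulEquiv.ulift.toMonoidHom) with hfPdef
  set fQ : ULift.{_} ↥Q₀ →* ULift.{_} Q :=
    MulEquiv.ulift.symm.toMonoidHom.comp (((MulAut.conj b).toMonoidHom.comp
      Q₀.subtype).comp MulEquiv.ulift.toMonoidHom) with hfQdef
  set f : ∀ i : Bool, boolFam (↥P₀) (↥Q₀) i →* boolFam P Q i :=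
    (fun i => Bool.rec fQ fP i) with hfdef
  have hfP : ∀ x : ULift.{_} ↥P₀, (f true x).down = a⁻¹ * ↑x.down * a := by
    intro x
    show (MulAut.conj a⁻¹) (↑x.down) = a⁻¹ * ↑x.down * a
    rw [MulAut.conj_apply]; group
  have hfQ : ∀ x : ULift.{_} ↥Q₀, (f false x).down = b * ↑x.down * b⁻¹ := by
    intro x
    show (MulAut.conj b) (↑x.down) = b * ↑x.down * b⁻¹
    rw [MulAut.conj_apply]
  have hcomm : ∀ i, (f i).comp (boolHom αf ωf i) = (boolHom α ω i).comp B.subtype := by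
    intro i
    cases i <;> ext c <;> apply ULift.ext
    · show (f false (ULift.up (ωf c))).down = ω ↑c
      rw [hfQ]
      show b * ↑(ωf c) * b⁻¹ = ω ↑c
      rw [hωf]; group
    · show (f true (ULift.up (αf c))).down = α ↑c
      rw [hfP]
      show a⁻¹ * ↑(αf c) * a = α ↑c
      rw [hαf]; group
  have hf : ∀ i (g : boolFam (↥P₀) (↥Q₀) i), g ∉ (boolHom αf ωf i).range →
      f i g ∉ (boolHom α ω i).range := by
    intro i
    cases i <;> intro g hg hr <;> apply hg <;> obtain ⟨c, hc⟩ := hr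
    · -- false : Q side
      have hdown : ω c = b * ↑g.down * b⁻¹ := by
        have := congrArg ULift.down hc
        rw [hfQ] at this
        exact this
      have hcB : c ∈ B := by
        rw [hB, hfold, Subgroup.mem_comap, Subgroup.mem_map]
        exact ⟨↑g.down, g.down.2, by simp only [MulEquiv.coe_toMonoidHom, MulAut.conj_apply, ← hdown]⟩
      refine ⟨⟨c, hcB⟩, ?_⟩
      apply ULift.ext
      show ωf ⟨c, hcB⟩ = g.down
      apply Subtype.ext
      rw [hωf ⟨c, hcB⟩]
      show b⁻¹ * ω c * b = ↑g.down
      rw [hdown]; group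
    · -- true : P side
      have hdown : α c = a⁻¹ * ↑g.down * a := by
        have := congrArg ULift.down hc
        rw [hfP] at this
        exact this
      have hcB : c ∈ B := by
        rw [hB, Subgroup.mem_comap, Subgroup.mem_map]
        exact ⟨↑g.down, g.down.2, by simp only [MulEquiv.coe_toMonoidHom, MulAut.conj_apply, hdown]; group⟩
      refine ⟨⟨c, hcB⟩, ?_⟩
      apply ULift.ext
      show αf ⟨c, hcB⟩ = g.down
      apply Subtype.ext
      rw [hαf ⟨c, hcB⟩]
      show a * α c * a⁻¹ = ↑g.down
      rw [hdown]; group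
  set Θ : PushoutI (boolHom αf ωf) →* PushoutI (boolHom α ω) :=
    theta B.subtype f hcomm with hΘdef
  have hΘinj : Function.Injective Θ :=
    theta_injective B.subtype f hcomm (boolHom_injective hα hω)
      (boolHom_injective hαfinj hωfinj) B.subtype_injective hf
  set g₀ : PushoutI (boolHom α ω) := PushoutI.of (φ := boolHom α ω) true (ULift.up a)
    with hg₀def
  set Ψ : Amal αf ωf →* Amal α ω :=
    (pushToAmal α ω).comp (((MulAut.conj g₀).toMonoidHom).comp
      (Θ.comp (amalToPush αf ωf))) with hΨdef
  have hΨeval : ∀ z, Ψ z = pushToAmal α ω (g₀ * Θ (amalToPush αf ωf z) * g₀⁻¹) := by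
    intro z; rfl
  -- key evaluation on P₀
  have key1 : ∀ x : ↥P₀, Ψ (Amal.inl αf ωf x) = Amal.inl α ω ↑x := by
    intro x
    rw [hΨeval, amalToPush_inl, hΘdef, theta_of, hg₀def, ← map_inv, ← map_mul, ← map_mul,
      pushToAmal_of_true]
    congr 1
    show a * (f true (ULift.up x)).down * a⁻¹ = ↑x
    rw [hfP]
    show a * (a⁻¹ * ↑x * a) * a⁻¹ = ↑x
    group
  -- key evaluation on Q₀
  have key2 : ∀ y : ↥Q₀, Ψ (Amal.inr αf ωf y) =
      (Amal.inl α ω a * Amal.inr α ω b) * Amal.inr α ω (y : Q) *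
        (Amal.inl α ω a * Amal.inr α ω b)⁻¹ := by
    intro y
    rw [hΨeval, amalToPush_inr, hΘdef, theta_of, hg₀def]
    have e2 : f false (ULift.up y) = (ULift.up (b * ↑y * b⁻¹) : boolFam P Q false) := by
      apply ULift.ext
      rw [hfQ]
    rw [e2, map_mul, map_mul, map_inv, pushToAmal_of_true, pushToAmal_of_false]
    show Amal.inl α ω a * Amal.inr α ω (b * ↑y * b⁻¹) * (Amal.inl α ω a)⁻¹ = _
    rw [show b * ↑y * b⁻¹ = b * ↑y * b⁻¹ from rfl]
    rw [map_mul, map_mul, map_inv]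
    rw [mul_inv_rev]
    group
  have hΨinj : Function.Injective Ψ := by
    rw [hΨdef]
    rw [MonoidHom.coe_comp, MonoidHom.coe_comp, MonoidHom.coe_comp]
    refine Function.Injective.comp ?_ (Function.Injective.comp ?_
      (Function.Injective.comp hΘinj ?_))
    · intro x y hxy
      have := congrArg (amalToPush α ω) hxy
      have h2 : ∀ z, amalToPush α ω (pushToAmal α ω z) = z := by
        intro z
        exact (amalPushEquiv α ω).apply_symm_apply z
      rwa [h2, h2] at this
    · exact (MulAut.conj g₀).injective
    · intro x y hxy
      have := congrArg (pushToAmal αf ωf) hxy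
      have h2 : ∀ z, pushToAmal αf ωf (amalToPush αf ωf z) = z := by
        intro z
        exact (amalPushEquiv αf ωf).symm_apply_apply z
      rwa [h2, h2] at this
  refine ⟨Ψ, key1, key2, hΨinj, ?_⟩
  -- the range computation
  have himage : ⇑Ψ '' (Set.range (Amal.inl αf ωf) ∪ Set.range (Amal.inr αf ωf)) =
      ((Amal.inl α ω '' (P₀ : Set P)) ∪
        ((fun x => (Amal.inl α ω a * Amal.inr α ω b) * x *
            (Amal.inl α ω a * Amal.inr α ω b)⁻¹) '' (Amal.inr α ω '' (Q₀ : Set Q)))) := by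
    rw [Set.image_union]
    congr 1
    · ext z
      constructor
      · rintro ⟨_, ⟨x, rfl⟩, rfl⟩
        exact ⟨↑x, x.2, (key1 x).symm⟩
      · rintro ⟨p, hp, rfl⟩
        exact ⟨Amal.inl αf ωf ⟨p, hp⟩, ⟨⟨p, hp⟩, rfl⟩, key1 ⟨p, hp⟩⟩
    · ext z
      constructor
      · rintro ⟨_, ⟨y, rfl⟩, rfl⟩
        exact ⟨Amal.inr α ω ↑y, ⟨↑y, y.2, rfl⟩, (key2 y).symm⟩
      · rintro ⟨_, ⟨q, hq, rfl⟩, rfl⟩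
        exact ⟨Amal.inr αf ωf ⟨q, hq⟩, ⟨⟨q, hq⟩, rfl⟩, key2 ⟨q, hq⟩⟩
  calc Ψ.range = Subgroup.map Ψ ⊤ := MonoidHom.range_eq_map Ψ
    _ = Subgroup.map Ψ (Subgroup.closure
          (Set.range (Amal.inl αf ωf) ∪ Set.range (Amal.inr αf ωf))) := by
        rw [amal_closure_top]
    _ = Subgroup.closure (⇑Ψ '' (Set.range (Amal.inl αf ωf) ∪ Set.range (Amal.inr αf ωf))) :=
        MonoidHom.map_closure Ψ _
    _ = _ := by rw [himage]
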